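/- arXiv:1210.7262 — 4 statements merged into one kernel-verified Lean document; each statement's English description precedes it below -/
import Mathlib

section
/- Let (X,d) be a length space, let n ≥ 5 be an integer, and suppose (X,d) satisfies the C-rough n-point condition for some C ≥ 0. Then (X,d) is C'-rCAT(0), where C' = C + 2√3. -/
noncomputable section

open RealInnerProductSpace

/-- The Euclidean plane with the Euclidean metric. -/
abbrev E2 : Type := EuclideanSpace ℝ (Fin 2)

/-- The length of the path `γ` between parameter values `a` and `b`. -/
noncomputable def pathLen {X : Type*} [MetricSpace X] (γ : ℝ → X) (a b : ℝ) : ℝ :=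
  (eVariationOn γ (Set.Icc a b)).toReal

/-- An `h`-short segment from `x` to `y`: a rectifiable path `γ : [0,L] → X`
with `γ 0 = x`, `γ L = y` and `len γ ≥ d(x,y) ≥ len γ - h`. -/
structure ShortSeg {X : Type*} [MetricSpace X] (h : ℝ) (x y : X) where
  L : ℝ
  L_nonneg : 0 ≤ L
  γ : ℝ → X
  src : γ 0 = x
  tgt : γ L = y
  rect : eVariationOn γ (Set.Icc 0 L) ≠ ⊤
  short₁ : dist x y ≤ pathLen γ 0 L
  short₂ : pathLen γ 0 L - h ≤ dist x y

/-- A length space: any two points are joined by an `h`-short segment, for every `h > 0`. -/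
def IsLengthSpace (X : Type*) [MetricSpace X] : Prop :=
  ∀ x y : X, ∀ h : ℝ, 0 < h → Nonempty (ShortSeg h x y)

/-- `u` lies on an `h`-short side from `a` to `b`, with comparison point `uc` on the
Euclidean segment `[ac, bc]`. -/
def SidePoint {X : Type*} [MetricSpace X] (h : ℝ) (a b : X) (ac bc : E2)
    (u : X) (uc : E2) : Prop :=
  ∃ (s : ShortSeg h a b) (t : ℝ), t ∈ Set.Icc 0 s.L ∧ s.γ t = u ∧
    uc ∈ segment ℝ ac bc ∧ dist ac uc ≤ pathLen s.γ 0 t ∧ dist uc bc ≤ pathLen s.γ t s.L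

/-- The `C`-rough CAT(0) condition relative to the function `H`: for every `h`-short
triangle with `h = H x y z`, every comparison triangle in `ℝ²`, and points `u, v` on
two different sides of the triangle with comparison points `uc, vc`, one has
`d(u,v) ≤ |uc - vc| + C`. -/
def RCatWith {X : Type*} [MetricSpace X] (C : ℝ) (H : X → X → X → ℝ) : Prop :=
  ∀ x y z : X, ∀ xc yc zc : E2,
    dist xc yc = dist x y → dist yc zc = dist y z → dist zc xc = dist z x →
    ∀ u v : X, ∀ uc vc : E2,
      ((SidePoint (H x y z) x y xc yc u uc ∧ SidePoint (H x y z) y z yc zc v vc) ∨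
       (SidePoint (H x y z) x y xc yc u uc ∧ SidePoint (H x y z) z x zc xc v vc) ∨
       (SidePoint (H x y z) y z yc zc u uc ∧ SidePoint (H x y z) z x zc xc v vc)) →
      dist u v ≤ dist uc vc + C

/-- The standard function `H(x,y,z) = 1/(1 ∨ d(x,y) ∨ d(x,z) ∨ d(y,z))`. -/
def StdH {X : Type*} [MetricSpace X] : X → X → X → ℝ :=
  fun x y z => 1 / (max 1 (max (dist x y) (max (dist x z) (dist y z))))

/-- `X` is `C`-rCAT(0). -/
def RCat (C : ℝ) (X : Type*) [MetricSpace X] : Prop :=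
  RCatWith C (StdH (X := X))

/-- `X` is `C`-hrCAT(0): it is `C`-rCAT(0;H) for some positive function `H`. -/
def HRCat (C : ℝ) (X : Type*) [MetricSpace X] : Prop :=
  ∃ H : X → X → X → ℝ, (∀ x y z, 0 < H x y z) ∧ RCatWith C H

/-- The `C`-rough `n`-point condition: every `n`-tuple `x₁, …, xₙ` (indexed cyclically
by `ZMod n`, with first point `x 1`) has a `C`-rough subembedding into `ℝ²`. -/
def RoughNPoint (C : ℝ) (n : ℕ) (X : Type*) [MetricSpace X] : Prop :=
  ∀ x : ZMod n → X, ∃ x' : ZMod n → E2,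
    (∀ i : ZMod n, dist (x i) (x (i - 1)) = dist (x' i) (x' (i - 1))) ∧
    (∀ i : ZMod n, dist (x 1) (x i) ≤ dist (x' 1) (x' i)) ∧
    (∀ i j : ZMod n, i ≠ 1 → j ≠ 1 → dist (x i) (x j) ≤ dist (x' i) (x' j) + C)

/-- `γ`, restricted to `[0, d(x,y)]`, is a unit-speed geodesic segment from `x` to `y`. -/
def IsGeodesicSeg {X : Type*} [MetricSpace X] (γ : ℝ → X) (x y : X) : Prop :=
  γ 0 = x ∧ γ (dist x y) = y ∧
    ∀ s ∈ Set.Icc (0:ℝ) (dist x y), ∀ t ∈ Set.Icc (0:ℝ) (dist x y),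
      dist (γ s) (γ t) = |s - t|

/-- A geodesic space: any two points are joined by a geodesic segment. -/
def GeodesicSpace (X : Type*) [MetricSpace X] : Prop :=
  ∀ x y : X, ∃ γ : ℝ → X, IsGeodesicSeg γ x y

/-- The CAT(0) comparison condition for geodesic triangles. -/
def IsCatZero (X : Type*) [MetricSpace X] : Prop :=
  ∀ x y z : X, ∀ γ₁ γ₂ : ℝ → X, IsGeodesicSeg γ₁ x y → IsGeodesicSeg γ₂ x z →
    ∀ xc yc zc : E2, dist xc yc = dist x y → dist yc zc = dist y z → dist zc xc = dist z x →
      ∀ s ∈ Set.Icc (0:ℝ) (dist x y), ∀ t ∈ Set.Icc (0:ℝ) (dist x z),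
        ∀ uc vc : E2, uc ∈ segment ℝ xc yc → vc ∈ segment ℝ xc zc →
          dist xc uc = s → dist xc vc = t → dist (γ₁ s) (γ₂ t) ≤ dist uc vc

/-- `X` is an `n`-point limit of the sequence of metric spaces `Y m`. -/
def IsNPointLimit (n : ℕ) (X : Type*) [MetricSpace X]
    (Y : ℕ → Type*) [∀ m, MetricSpace (Y m)] : Prop :=
  ∀ x : Fin n → X, ∀ ε : ℝ, 0 < ε →
    {m : ℕ | ∃ y : Fin n → Y m, ∀ i j : Fin n,
      |dist (x i) (x j) - dist (y i) (y j)| < ε}.Infinite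


theorem perSideScalar (h A α α' p p' e r lam : ℝ)
    (hh1 : h ≤ 1) (hh0 : 0 < h) (hhA : h * A ≤ 1)
    (hpα : p ≤ α) (hp'α' : p' ≤ α')
    (hαα' : α + α' ≤ A + h)
    (he : A ≤ e) (he2 : e ≤ p + p')
    (hr0 : A - α' ≤ r) (hr1 : r ≤ α)
    (hlam : r = lam * e) (hlam0 : 0 ≤ lam) (hlam1 : lam ≤ 1) :
    (1 - lam) * p ^ 2 + lam * p' ^ 2 - lam * (1 - lam) * e ^ 2
      ≤ 1 + 2 * lam * (1 - lam) := by
  have hS0 : 0 ≤ α + α' - A := by linarith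
  have hS1 : α + α' - A ≤ h := by linarith
  have hs0 : 0 ≤ p + p' - e := by linarith
  have hsh : p + p' - e ≤ h := by linarith
  have hP1le : p - lam * e ≤ α + α' - A := by rw [← hlam]; linarith
  have hP1ge : -((α + α' - A) - (p + p' - e)) ≤ p - lam * e := by rw [← hlam]; linarith
  have hse : (p + p' - e) * e ≤ 1 := by
    have t1 : h * (p + p' - e) * A ≤ (p + p' - e) := by nlinarith
    have ths : h * (p + p' - e) ≤ 1 := by nlinarith
    have t2 : h * (p + p' - e) * (e - A) ≤ e - A := by nlinarith
    have t3 : h * ((p + p' - e) * e) ≤ h * 1 := by nlinarith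
    exact le_of_mul_le_mul_left t3 hh0
  have hsq1 : (p - lam * e) ^ 2 ≤ (α + α' - A) ^ 2 :=
    sq_le_sq' (by linarith) hP1le
  have hsq2 : ((p - lam * e) - (p + p' - e)) ^ 2 ≤ (α + α' - A) ^ 2 :=
    sq_le_sq' (by linarith) (by linarith)
  have hid : (1 - lam) * p ^ 2 + lam * p' ^ 2 - lam * (1 - lam) * e ^ 2
      = (1 - lam) * (p - lam * e) ^ 2 + lam * ((p - lam * e) - (p + p' - e)) ^ 2
        + 2 * lam * (1 - lam) * ((p + p' - e) * e) := by ring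
  have h2l : (0:ℝ) ≤ 2 * lam * (1 - lam) := by
    have := mul_nonneg hlam0 (by linarith : (0:ℝ) ≤ 1 - lam); linarith [this]
  have A1 := mul_le_mul_of_nonneg_left hsq1 (by linarith : (0:ℝ) ≤ 1 - lam)
  have A2 := mul_le_mul_of_nonneg_left hsq2 hlam0
  have A3 : 2 * lam * (1 - lam) * ((p + p' - e) * e) ≤ 2 * lam * (1 - lam) := by
    calc 2 * lam * (1 - lam) * ((p + p' - e) * e) ≤ 2 * lam * (1 - lam) * 1 :=
          mul_le_mul_of_nonneg_left hse h2l
      _ = 2 * lam * (1 - lam) := mul_one _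
  have A4 : (α + α' - A) ^ 2 ≤ 1 := by nlinarith
  linarith

theorem finalScalar (lam : ℝ) (h0 : 0 ≤ lam) (h1 : lam ≤ 1) :
    1 + 2 * lam * (1 - lam) ≤ (Real.sqrt 3 - lam / Real.sqrt 2) ^ 2 := by
  have s3 : Real.sqrt 3 ^ 2 = 3 := Real.sq_sqrt (by norm_num)
  have s2 : Real.sqrt 2 ^ 2 = 2 := Real.sq_sqrt (by norm_num)
  have s2pos : 0 < Real.sqrt 2 := Real.sqrt_pos.2 (by norm_num)
  set c : ℝ := Real.sqrt 3 / Real.sqrt 2 with hcdef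
  have hc0 : 0 ≤ c := div_nonneg (Real.sqrt_nonneg 3) (Real.sqrt_nonneg 2)
  have hc : c ^ 2 = 3 / 2 := by rw [hcdef, div_pow, s3, s2]
  have hcb : c ≤ 5 / 4 := by nlinarith
  have expand : (Real.sqrt 3 - lam / Real.sqrt 2) ^ 2
      = 3 - 2 * lam * c + lam ^ 2 / 2 := by
    rw [hcdef]
    field_simp
    nlinarith [s3, s2, Real.sqrt_nonneg 2, Real.sqrt_nonneg 3]
  rw [expand]
  nlinarith [sq_nonneg (5 * lam - 2 - 2 * c), hc, hcb]

theorem nBound (h A B D e f : ℝ)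
    (hA0 : 0 ≤ A) (hB0 : 0 ≤ B) (hD0 : 0 ≤ D) (hhD : h * D ≤ 1)
    (heA : A ≤ e) (heA2 : e ≤ A + h) (hfB : B ≤ f) (hfB2 : f ≤ B + h)
    (htri : (A - B) ^ 2 ≤ D ^ 2) :
    e * f * (A ^ 2 + B ^ 2 - D ^ 2) ≤ A * B * (e ^ 2 + f ^ 2 - D ^ 2) + 2 * (A * B) := by
  have hefAB : A * B ≤ e * f := by nlinarith
  have hAB0 : 0 ≤ A * B := mul_nonneg hA0 hB0
  rcases le_or_gt (A ^ 2 + B ^ 2 - D ^ 2) 0 with hc | hc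
  · nlinarith [mul_nonneg (mul_nonneg hA0 hB0) (by nlinarith : (0:ℝ) ≤ e^2 - A^2 + (f^2 - B^2)),
      mul_nonpos_of_nonpos_of_nonneg hc (by linarith : (0:ℝ) ≤ e*f - A*B)]
  · have hab1 : A - B ≤ D := by nlinarith
    have hab2 : B - A ≤ D := by nlinarith
    have key : (A - B) * ((f - B) - (e - A)) ≤ D * h := by
      nlinarith [mul_nonneg (by linarith : (0:ℝ) ≤ D - (A-B)) (by linarith : (0:ℝ) ≤ h + ((f-B)-(e-A))),
        mul_nonneg (by linarith : (0:ℝ) ≤ D + (A-B)) (by linarith : (0:ℝ) ≤ h - ((f-B)-(e-A)))]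
    have key2 : (A - B) ^ 2 - (e - f) ^ 2 ≤ 2 * (D * h) := by
      nlinarith [sq_nonneg ((e - A) - (f - B))]
    have hABDh : A * B * (2 * (D * h)) ≤ 2 * (A * B) := by nlinarith
    nlinarith [mul_le_mul_of_nonneg_left key2 hAB0,
      mul_le_mul_of_nonneg_right hefAB (le_of_lt hc),
      mul_nonneg hAB0 (mul_nonneg (by linarith : (0:ℝ) ≤ e - A) (by linarith : (0:ℝ) ≤ f - B))]

/-- Core Euclidean comparison lemma. -/



theorem sideDisp (a b u : E2) (lam : ℝ) :
    dist u (a + lam • (b - a)) ^ 2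
      = (1 - lam) * dist a u ^ 2 + lam * dist u b ^ 2 - lam * (1 - lam) * dist a b ^ 2 := by
  have hdiff : u - (a + lam • (b - a)) = (u - a) - lam • (b - a) := by abel
  have h1 : dist u (a + lam • (b - a)) ^ 2
      = ‖u - a‖ ^ 2 - 2 * (lam * ⟪u - a, b - a⟫) + lam ^ 2 * ‖b - a‖ ^ 2 := by
    rw [dist_eq_norm, hdiff, norm_sub_sq_real, real_inner_smul_right, norm_smul]
    simp only [Real.norm_eq_abs, mul_pow, sq_abs]
    try ring
  have h2 : ‖u - b‖ ^ 2 = ‖u - a‖ ^ 2 - 2 * ⟪u - a, b - a⟫ + ‖b - a‖ ^ 2 := by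
    have h3 : u - b = (u - a) - (b - a) := by abel
    rw [h3, norm_sub_sq_real]
  have e1 : dist a u = ‖u - a‖ := by rw [dist_comm, dist_eq_norm]
  have e2 : dist u b = ‖u - b‖ := dist_eq_norm u b
  have e3 : dist a b = ‖b - a‖ := by rw [dist_comm, dist_eq_norm]
  rw [h1, e1, e2, e3, h2]; ring

theorem hingeDisp (a b c : E2) (lam mu : ℝ) :
    dist (a + lam • (b - a)) (a + mu • (c - a)) ^ 2
      = lam ^ 2 * dist a b ^ 2 + mu ^ 2 * dist a c ^ 2
        - lam * mu * (dist a b ^ 2 + dist a c ^ 2 - dist b c ^ 2) := by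
  have hdiff : (a + lam • (b - a)) - (a + mu • (c - a)) = lam • (b - a) - mu • (c - a) := by
    abel
  have h1 : dist (a + lam • (b - a)) (a + mu • (c - a)) ^ 2
      = lam ^ 2 * ‖b - a‖ ^ 2 - 2 * (lam * (mu * ⟪b - a, c - a⟫)) + mu ^ 2 * ‖c - a‖ ^ 2 := by
    rw [dist_eq_norm, hdiff, norm_sub_sq_real, real_inner_smul_right, real_inner_smul_left,
      norm_smul, norm_smul]
    simp only [Real.norm_eq_abs, mul_pow, sq_abs]
    ring
  have h2 : ‖b - c‖ ^ 2 = ‖b - a‖ ^ 2 - 2 * ⟪b - a, c - a⟫ + ‖c - a‖ ^ 2 := by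
    have h3 : b - c = (b - a) - (c - a) := by abel
    rw [h3, norm_sub_sq_real]
  have e1 : dist a b = ‖b - a‖ := by rw [dist_comm, dist_eq_norm]
  have e2 : dist a c = ‖c - a‖ := by rw [dist_comm, dist_eq_norm]
  have e3 : dist b c = ‖b - c‖ := dist_eq_norm b c
  rw [h1, e1, e2, e3, h2]; ring

theorem segParam {x y z : E2} (h : z ∈ segment ℝ x y) :
    ∃ t : ℝ, 0 ≤ t ∧ t ≤ 1 ∧ z = x + t • (y - x) ∧ dist x z = t * dist x y := by
  rcases h with ⟨t1, t2, ht1, ht2, hsum, heq⟩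
  have hz : z = x + t2 • (y - x) := by
    rw [← heq]
    have ht1' : t1 = 1 - t2 := by linarith
    rw [ht1']
    module
  refine ⟨t2, ht2, by linarith, hz, ?_⟩
  have h4 : z - x = t2 • (y - x) := by rw [hz]; abel
  rw [dist_eq_norm', h4, norm_smul, dist_eq_norm']
  simp [abs_of_nonneg ht2]

theorem le_of_sq_le_sq' {a b : ℝ} (h : a ^ 2 ≤ b ^ 2) (ha : 0 ≤ a) (hb : 0 ≤ b) : a ≤ b := by
  nlinarith

theorem one_le_sqrt3 : (1:ℝ) ≤ Real.sqrt 3 := by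
  nlinarith [Real.sq_sqrt (by norm_num : (3:ℝ) ≥ 0), Real.sqrt_nonneg 3]

theorem one_le_sqrt2 : (1:ℝ) ≤ Real.sqrt 2 := by
  nlinarith [Real.sq_sqrt (by norm_num : (2:ℝ) ≥ 0), Real.sqrt_nonneg 2]

theorem triangle_sq {A B D : ℝ} (hD0 : 0 ≤ D) (t1 : A ≤ B + D) (t2 : B ≤ A + D) :
    (A - B) ^ 2 ≤ D ^ 2 := by nlinarith

theorem sq_diff_nonpos {B D : ℝ} (hB0 : 0 ≤ B) (hD0 : 0 ≤ D) (h : (0 - B)^2 ≤ D^2) :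
    B ^ 2 - D ^ 2 ≤ 0 := by nlinarith

theorem sq_tri_nonneg {e f D : ℝ} (he : 0 ≤ e) (hf : 0 ≤ f) (hD : D ≤ e + f) (hD0 : 0 ≤ D) :
    0 ≤ e ^ 2 + f ^ 2 - D ^ 2 + 2 * (e * f) := by nlinarith

theorem amgm2 {lam mu : ℝ} : 2 * (lam * mu) ≤ (lam + mu) ^ 2 / 2 := by
  nlinarith [sq_nonneg (lam - mu)]

theorem euclidCore (a' b' c' u' v' ac bc cc uc vc : E2) (h A B D α α' β β' : ℝ)
    (hh0 : 0 < h) (hh1 : h ≤ 1) (hhA : h * A ≤ 1) (hhB : h * B ≤ 1) (hhD : h * D ≤ 1)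
    (hA : dist ac bc = A) (hB : dist ac cc = B) (hD : dist bc cc = D)
    (hDp : dist b' c' = D)
    (heA : A ≤ dist a' b') (hfB : B ≤ dist a' c')
    (hpα : dist a' u' ≤ α) (hp'α : dist u' b' ≤ α') (hαα' : α + α' ≤ A + h)
    (hqβ : dist a' v' ≤ β) (hq'β : dist v' c' ≤ β') (hββ' : β + β' ≤ B + h)
    (huc : uc ∈ segment ℝ ac bc) (huc1 : dist ac uc ≤ α) (huc2 : dist uc bc ≤ α')
    (hvc : vc ∈ segment ℝ ac cc) (hvc1 : dist ac vc ≤ β) (hvc2 : dist cc vc ≤ β') :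
    dist u' v' ≤ dist uc vc + 2 * Real.sqrt 3 := by
  have hA0 : 0 ≤ A := hA ▸ dist_nonneg
  have hB0 : 0 ≤ B := hB ▸ dist_nonneg
  have hD0 : 0 ≤ D := hD ▸ dist_nonneg
  have he0 : 0 ≤ dist a' b' := dist_nonneg
  have hf0 : 0 ≤ dist a' c' := dist_nonneg
  have hr0' : 0 ≤ dist ac uc := dist_nonneg
  have hρ0' : 0 ≤ dist ac vc := dist_nonneg
  obtain ⟨τ, hτ0, hτ1, hucz, hucd⟩ := segParam huc
  obtain ⟨σ, hσ0, hσ1, hvcz, hvcd⟩ := segParam hvc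
  have hrA : dist ac uc = τ * A := by rw [hucd, hA]
  have hρB : dist ac vc = σ * B := by rw [hvcd, hB]
  have hsum_u := dist_add_dist_of_mem_segment huc
  have hsum_v := dist_add_dist_of_mem_segment hvc
  rw [hA] at hsum_u
  rw [hB] at hsum_v
  have hrle : dist ac uc ≤ A := by
    linarith only [hsum_u, dist_nonneg (x := uc) (y := bc)]
  have hρle : dist ac vc ≤ B := by
    linarith only [hsum_v, dist_nonneg (x := vc) (y := cc)]
  have hrge : A - α' ≤ dist ac uc := by linarith only [hsum_u, huc2]
  have hρge : B - β' ≤ dist ac vc := by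
    have hcm : dist vc cc = dist cc vc := dist_comm _ _
    linarith only [hsum_v, hvc2, hcm]
  set lam := dist ac uc / dist a' b' with hlam_def
  set mu := dist ac vc / dist a' c' with hmu_def
  have hlam0 : 0 ≤ lam := div_nonneg hr0' he0
  have hmu0 : 0 ≤ mu := div_nonneg hρ0' hf0
  have hlam1 : lam ≤ 1 := div_le_one_of_le₀ (le_trans hrle heA) he0
  have hmu1 : mu ≤ 1 := div_le_one_of_le₀ (le_trans hρle hfB) hf0
  have hlam : dist ac uc = lam * dist a' b' := by
    rcases eq_or_lt_of_le he0 with h6 | h6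
    · have h7 : dist ac uc = 0 := le_antisymm (by linarith only [hrle, heA, h6]) hr0'
      rw [h7, hlam_def, h7]; simp
    · rw [hlam_def]; field_simp
  have hmu : dist ac vc = mu * dist a' c' := by
    rcases eq_or_lt_of_le hf0 with h6 | h6
    · have h7 : dist ac vc = 0 := le_antisymm (by linarith only [hρle, hfB, h6]) hρ0'
      rw [h7, hmu_def, h7]; simp
    · rw [hmu_def]; field_simp
  have hsqrt2pos : (0:ℝ) < Real.sqrt 2 := by linarith only [one_le_sqrt2]
  have hside_u : dist u' (a' + lam • (b' - a')) ≤ Real.sqrt 3 - lam / Real.sqrt 2 := by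
    refine le_of_sq_le_sq' ?_ dist_nonneg ?_
    · rw [sideDisp a' b' u' lam]
      calc (1 - lam) * dist a' u' ^ 2 + lam * dist u' b' ^ 2
            - lam * (1 - lam) * dist a' b' ^ 2
          ≤ 1 + 2 * lam * (1 - lam) :=
            perSideScalar h A α α' _ _ _ _ lam hh1 hh0 hhA hpα hp'α hαα'
              heA (dist_triangle a' u' b') hrge huc1 hlam hlam0 hlam1
        _ ≤ (Real.sqrt 3 - lam / Real.sqrt 2) ^ 2 := finalScalar lam hlam0 hlam1
    · have h8 : lam / Real.sqrt 2 ≤ 1 := by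
        rw [div_le_one hsqrt2pos]; linarith only [hlam1, one_le_sqrt2]
      linarith only [h8, one_le_sqrt3]
  have hside_v : dist v' (a' + mu • (c' - a')) ≤ Real.sqrt 3 - mu / Real.sqrt 2 := by
    refine le_of_sq_le_sq' ?_ dist_nonneg ?_
    · rw [sideDisp a' c' v' mu]
      calc (1 - mu) * dist a' v' ^ 2 + mu * dist v' c' ^ 2
            - mu * (1 - mu) * dist a' c' ^ 2
          ≤ 1 + 2 * mu * (1 - mu) :=
            perSideScalar h B β β' _ _ _ _ mu hh1 hh0 hhB hqβ hq'β hββ'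
              hfB (dist_triangle a' v' c') hρge hvc1 hmu hmu0 hmu1
        _ ≤ (Real.sqrt 3 - mu / Real.sqrt 2) ^ 2 := finalScalar mu hmu0 hmu1
    · have h8 : mu / Real.sqrt 2 ≤ 1 := by
        rw [div_le_one hsqrt2pos]; linarith only [hmu1, one_le_sqrt2]
      linarith only [h8, one_le_sqrt3]
  have hlmnn : 0 ≤ lam * mu := mul_nonneg hlam0 hmu0
  have hkey : τ * σ * (A ^ 2 + B ^ 2 - D ^ 2)
      ≤ lam * mu * (dist a' b' ^ 2 + dist a' c' ^ 2 - D ^ 2) + 2 * (lam * mu) := by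
    have t1 : A ≤ B + D := by
      rw [← hA, ← hB, ← hD]
      calc dist ac bc ≤ dist ac cc + dist cc bc := dist_triangle _ _ _
        _ = dist ac cc + dist bc cc := by rw [dist_comm cc bc]
    have t2 : B ≤ A + D := by rw [← hA, ← hB, ← hD]; exact dist_triangle ac bc cc
    have htriD : (A - B) ^ 2 ≤ D ^ 2 := triangle_sq hD0 t1 t2
    have hDef : D ≤ dist a' b' + dist a' c' := by
      rw [← hDp]
      calc dist b' c' ≤ dist b' a' + dist a' c' := dist_triangle _ _ _
        _ = dist a' b' + dist a' c' := by rw [dist_comm b' a']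
    rcases eq_or_lt_of_le hA0 with hA0' | hA0'
    · have hBD2 : B ^ 2 - D ^ 2 ≤ 0 := sq_diff_nonpos hB0 hD0 (by rw [hA0']; exact htriD)
      have hL : τ * σ * (A ^ 2 + B ^ 2 - D ^ 2) ≤ 0 := by
        rw [← hA0']
        have hτσ : 0 ≤ τ * σ := mul_nonneg hτ0 hσ0
        nlinarith only [hBD2, hτσ]
      have hr00 : dist ac uc = 0 := by rw [hrA, ← hA0', mul_zero]
      have h9 : lam * dist a' b' = 0 := by rw [← hlam, hr00]
      rcases mul_eq_zero.1 h9 with h8 | h8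
      · rw [h8]; simpa using hL
      · have h10 : 0 ≤ dist a' b' ^ 2 + dist a' c' ^ 2 - D ^ 2 := by
          rw [h8] at hDef ⊢
          nlinarith only [hDef, hD0, hf0]
        have h11 : 0 ≤ lam * mu * (dist a' b' ^ 2 + dist a' c' ^ 2 - D ^ 2) :=
          mul_nonneg hlmnn h10
        linarith only [hL, h11, hlmnn]
    rcases eq_or_lt_of_le hB0 with hB0' | hB0'
    · have hAD2 : A ^ 2 - D ^ 2 ≤ 0 := by
        have := sq_diff_nonpos hA0 hD0 (by rw [hB0']; nlinarith only [htriD])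
        exact this
      have hL : τ * σ * (A ^ 2 + B ^ 2 - D ^ 2) ≤ 0 := by
        rw [← hB0']
        have hτσ : 0 ≤ τ * σ := mul_nonneg hτ0 hσ0
        nlinarith only [hAD2, hτσ]
      have hρ00 : dist ac vc = 0 := by rw [hρB, ← hB0', mul_zero]
      have h9 : mu * dist a' c' = 0 := by rw [← hmu, hρ00]
      rcases mul_eq_zero.1 h9 with h8 | h8
      · rw [h8]; simpa using hL
      · have h10 : 0 ≤ dist a' b' ^ 2 + dist a' c' ^ 2 - D ^ 2 := by
          rw [h8] at hDef ⊢
          nlinarith only [hDef, hD0, he0]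
        have h11 : 0 ≤ lam * mu * (dist a' b' ^ 2 + dist a' c' ^ 2 - D ^ 2) :=
          mul_nonneg hlmnn h10
        linarith only [hL, h11, hlmnn]
    · have heA2 : dist a' b' ≤ A + h :=
        le_trans (dist_triangle a' u' b') (by linarith only [hpα, hp'α, hαα'])
      have hfB2 : dist a' c' ≤ B + h :=
        le_trans (dist_triangle a' v' c') (by linarith only [hqβ, hq'β, hββ'])
      have hN := nBound h A B D (dist a' b') (dist a' c') hA0 hB0 hD0 hhD heA heA2 hfB hfB2 htriD
      have hABpos : 0 < A * B := mul_pos hA0' hB0'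
      rw [← mul_le_mul_iff_of_pos_right hABpos]
      have h9 : τ * A = lam * dist a' b' := by rw [← hrA, hlam]
      have h10 : σ * B = mu * dist a' c' := by rw [← hρB, hmu]
      have hLHS : τ * σ * (A ^ 2 + B ^ 2 - D ^ 2) * (A * B)
          = lam * mu * (dist a' b' * dist a' c' * (A ^ 2 + B ^ 2 - D ^ 2)) := by
        linear_combination ((A ^ 2 + B ^ 2 - D ^ 2) * (σ * B)) * h9
          + ((A ^ 2 + B ^ 2 - D ^ 2) * (lam * dist a' b')) * h10
      rw [hLHS]
      calc lam * mu * (dist a' b' * dist a' c' * (A ^ 2 + B ^ 2 - D ^ 2))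
          ≤ lam * mu * (A * B * (dist a' b' ^ 2 + dist a' c' ^ 2 - D ^ 2) + 2 * (A * B)) :=
            mul_le_mul_of_nonneg_left hN hlmnn
        _ = (lam * mu * (dist a' b' ^ 2 + dist a' c' ^ 2 - D ^ 2) + 2 * (lam * mu)) * (A * B) := by
            ring
  have hmid : dist (a' + lam • (b' - a')) (a' + mu • (c' - a'))
      ≤ dist uc vc + (lam + mu) / Real.sqrt 2 := by
    have hW : dist (a' + lam • (b' - a')) (a' + mu • (c' - a')) ^ 2
        = dist ac uc ^ 2 + dist ac vc ^ 2
          - lam * mu * (dist a' b' ^ 2 + dist a' c' ^ 2 - D ^ 2) := by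
      rw [hingeDisp, hDp, hlam, hmu]; ring
    have hU : dist uc vc ^ 2
        = dist ac uc ^ 2 + dist ac vc ^ 2 - τ * σ * (A ^ 2 + B ^ 2 - D ^ 2) := by
      conv_lhs => rw [hucz, hvcz]
      rw [hingeDisp, hA, hB, hD, hrA, hρB]; ring
    have hrhs0 : 0 ≤ (lam + mu) / Real.sqrt 2 :=
      div_nonneg (by linarith only [hlam0, hmu0]) (le_of_lt hsqrt2pos)
    refine le_of_sq_le_sq' ?_ dist_nonneg ?_
    · have hs2 : ((lam + mu) / Real.sqrt 2) ^ 2 = (lam + mu) ^ 2 / 2 := by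
        rw [div_pow, Real.sq_sqrt (by norm_num : (2:ℝ) ≥ 0)]
      have hexp : (dist uc vc + (lam + mu) / Real.sqrt 2) ^ 2
          = dist uc vc ^ 2 + 2 * dist uc vc * ((lam + mu) / Real.sqrt 2)
            + ((lam + mu) / Real.sqrt 2) ^ 2 := by ring
      have hcross : 0 ≤ 2 * dist uc vc * ((lam + mu) / Real.sqrt 2) :=
        mul_nonneg (mul_nonneg (by norm_num) dist_nonneg) hrhs0
      rw [hexp, hW, hs2]
      linarith only [hU, hkey, hcross, amgm2 (lam := lam) (mu := mu)]
    · linarith only [hrhs0, dist_nonneg (x := uc) (y := vc)]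
  have hdivsplit : (lam + mu) / Real.sqrt 2 = lam / Real.sqrt 2 + mu / Real.sqrt 2 :=
    add_div _ _ _
  calc dist u' v'
      ≤ dist u' (a' + lam • (b' - a')) + dist (a' + lam • (b' - a')) v' := dist_triangle _ _ _
    _ ≤ dist u' (a' + lam • (b' - a')) + (dist (a' + lam • (b' - a')) (a' + mu • (c' - a'))
        + dist (a' + mu • (c' - a')) v') := by
          linarith only [dist_triangle (a' + lam • (b' - a')) (a' + mu • (c' - a')) v']
    _ = dist u' (a' + lam • (b' - a')) + dist (a' + lam • (b' - a')) (a' + mu • (c' - a'))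
        + dist v' (a' + mu • (c' - a')) := by rw [dist_comm (a' + mu • (c' - a')) v']; ring
    _ ≤ (Real.sqrt 3 - lam / Real.sqrt 2) + (dist uc vc + (lam + mu) / Real.sqrt 2)
        + (Real.sqrt 3 - mu / Real.sqrt 2) := add_le_add (add_le_add hside_u hmid) hside_v
    _ = dist uc vc + 2 * Real.sqrt 3 := by rw [hdivsplit]; ring


section PathLen
variable {X : Type*} [MetricSpace X]

theorem pathLen_nonneg (γ : ℝ → X) (a b : ℝ) : 0 ≤ pathLen γ a b :=
  ENNReal.toReal_nonneg

theorem eVar_rev (γ : ℝ → X) (L x y : ℝ) :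
    eVariationOn (fun τ => γ (L - τ)) (Set.Icc x y) = eVariationOn γ (Set.Icc (L - y) (L - x)) := by
  have hanti : AntitoneOn (fun τ => L - τ) (Set.Icc x y) := by
    intro s _ t _ hst
    simp only
    linarith
  have := eVariationOn.comp_eq_of_antitoneOn γ (fun τ => L - τ) hanti
  rw [Set.image_const_sub_Icc] at this
  exact this

theorem pathLen_rev (γ : ℝ → X) (L x y : ℝ) :
    pathLen (fun τ => γ (L - τ)) x y = pathLen γ (L - y) (L - x) := by
  unfold pathLen
  rw [eVar_rev]

/-- Subinterval variation is finite. -/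
theorem eVar_sub_ne_top {γ : ℝ → X} {L : ℝ} (hrect : eVariationOn γ (Set.Icc 0 L) ≠ ⊤)
    {x y : ℝ} (hx : 0 ≤ x) (hy : y ≤ L) :
    eVariationOn γ (Set.Icc x y) ≠ ⊤ := by
  intro htop
  apply hrect
  have hsub : Set.Icc x y ⊆ Set.Icc 0 L := Set.Icc_subset_Icc hx hy
  have := eVariationOn.mono γ hsub
  rw [htop] at this
  exact top_unique this

/-- Distance between points on the path is at most the length. -/
theorem dist_le_pathLen {γ : ℝ → X} {L : ℝ} (hrect : eVariationOn γ (Set.Icc 0 L) ≠ ⊤)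
    {x y s t : ℝ} (hx : 0 ≤ x) (hy : y ≤ L) (hs : s ∈ Set.Icc x y) (ht : t ∈ Set.Icc x y) :
    dist (γ s) (γ t) ≤ pathLen γ x y := by
  have h1 : edist (γ s) (γ t) ≤ eVariationOn γ (Set.Icc x y) :=
    eVariationOn.edist_le γ hs ht
  have h2 := eVar_sub_ne_top hrect hx hy
  rw [dist_edist]
  rw [pathLen]
  exact ENNReal.toReal_le_toReal (by simp [edist_ne_top]) h2 |>.mpr h1

/-- Additivity of path length. -/
theorem pathLen_add {γ : ℝ → X} {L t : ℝ} (hrect : eVariationOn γ (Set.Icc 0 L) ≠ ⊤)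
    (ht0 : 0 ≤ t) (htL : t ≤ L) :
    pathLen γ 0 t + pathLen γ t L = pathLen γ 0 L := by
  have h1 := eVariationOn.Icc_add_Icc γ (s := Set.Icc 0 L) ht0 htL ⟨ht0, htL⟩
  have e1 : Set.Icc 0 L ∩ Set.Icc 0 t = Set.Icc 0 t := by
    rw [Set.Icc_inter_Icc]
    congr 1 <;> simp [ht0, htL, max_eq_left, min_eq_right]
  have e2 : Set.Icc 0 L ∩ Set.Icc t L = Set.Icc t L := by
    rw [Set.Icc_inter_Icc]
    congr 1 <;> simp [ht0, htL]
  have e3 : Set.Icc 0 L ∩ Set.Icc 0 L = Set.Icc 0 L := Set.inter_self _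
  rw [e1, e2, e3] at h1
  have f1 := eVar_sub_ne_top hrect (le_refl 0) htL
  have f2 := eVar_sub_ne_top hrect ht0 (le_refl L)
  unfold pathLen
  rw [← h1, ENNReal.toReal_add f1 f2]

end PathLen

section Reversal
variable {X : Type*} [MetricSpace X]

/-- Reversal of a short segment. -/
def ShortSeg.rev {h : ℝ} {a b : X} (s : ShortSeg h a b) : ShortSeg h b a where
  L := s.L
  L_nonneg := s.L_nonneg
  γ := fun τ => s.γ (s.L - τ)
  src := by simp [s.tgt]
  tgt := by simp [s.src]
  rect := by
    rw [show (fun τ => s.γ (s.L - τ)) = (fun τ => s.γ (s.L - τ)) from rfl]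
    rw [eVar_rev s.γ s.L 0 s.L]
    simpa using s.rect
  short₁ := by
    rw [dist_comm, pathLen_rev]
    simpa using s.short₁
  short₂ := by
    rw [dist_comm, pathLen_rev]
    simpa using s.short₂

theorem SidePoint.symm {h : ℝ} {a b : X} {ac bc : E2} {u : X} {uc : E2}
    (H : SidePoint h a b ac bc u uc) : SidePoint h b a bc ac u uc := by
  obtain ⟨s, t, ⟨ht0, htL⟩, hu, hseg, h1, h2⟩ := H
  refine ⟨s.rev, s.L - t, ⟨by linarith, by simp [ShortSeg.rev]; linarith⟩, ?_, ?_, ?_, ?_⟩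
  · show s.γ (s.L - (s.L - t)) = u
    rw [sub_sub_cancel]
    exact hu
  · rw [segment_symm]
    exact hseg
  · show dist bc uc ≤ pathLen (fun τ => s.γ (s.L - τ)) 0 (s.L - t)
    rw [pathLen_rev]
    simp only [sub_sub_cancel, sub_zero]
    rw [dist_comm]
    exact h2
  · show dist uc ac ≤ pathLen (fun τ => s.γ (s.L - τ)) (s.L - t) s.L
    rw [pathLen_rev]
    simp only [sub_sub_cancel, sub_self]
    rw [dist_comm]
    exact h1

end Reversal


section Shared
variable {X : Type*} [MetricSpace X]

theorem sharedVertex {C : ℝ} (hC : 0 ≤ C) {n : ℕ} (hn : 5 ≤ n)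
    (hpt : RoughNPoint C n X) (a b c u v : X) (ac bc cc uc vc : E2) (h : ℝ)
    (hh0 : 0 < h) (hh1 : h ≤ 1)
    (hhA : h * dist a b ≤ 1) (hhB : h * dist a c ≤ 1) (hhD : h * dist b c ≤ 1)
    (hA : dist ac bc = dist a b) (hB : dist ac cc = dist a c) (hD : dist bc cc = dist b c)
    (hu : SidePoint h a b ac bc u uc) (hv : SidePoint h a c ac cc v vc) :
    dist u v ≤ dist uc vc + (C + 2 * Real.sqrt 3) := by
  haveI : NeZero n := ⟨by omega⟩
  obtain ⟨s1, t1, ⟨ht10, ht1L⟩, hut, hseg_u, hu1, hu2⟩ := hu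
  obtain ⟨s2, t2, ⟨ht20, ht2L⟩, hvt, hseg_v, hv1, hv2⟩ := hv
  -- path length facts, u side
  have hαsum : pathLen s1.γ 0 t1 + pathLen s1.γ t1 s1.L = pathLen s1.γ 0 s1.L :=
    pathLen_add s1.rect ht10 ht1L
  have hαα' : pathLen s1.γ 0 t1 + pathLen s1.γ t1 s1.L ≤ dist a b + h := by
    rw [hαsum]; linarith [s1.short₂]
  have hpα : dist a u ≤ pathLen s1.γ 0 t1 := by
    have hle := dist_le_pathLen s1.rect (le_refl 0) ht1L
      (Set.left_mem_Icc.2 ht10) (Set.right_mem_Icc.2 ht10)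
    rwa [s1.src, hut] at hle
  have hp'α : dist u b ≤ pathLen s1.γ t1 s1.L := by
    have hle := dist_le_pathLen s1.rect ht10 (le_refl s1.L)
      (Set.left_mem_Icc.2 ht1L) (Set.right_mem_Icc.2 ht1L)
    rwa [s1.tgt, hut] at hle
  -- path length facts, v side
  have hβsum : pathLen s2.γ 0 t2 + pathLen s2.γ t2 s2.L = pathLen s2.γ 0 s2.L :=
    pathLen_add s2.rect ht20 ht2L
  have hββ' : pathLen s2.γ 0 t2 + pathLen s2.γ t2 s2.L ≤ dist a c + h := by
    rw [hβsum]; linarith [s2.short₂]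
  have hqβ : dist a v ≤ pathLen s2.γ 0 t2 := by
    have hle := dist_le_pathLen s2.rect (le_refl 0) ht2L
      (Set.left_mem_Icc.2 ht20) (Set.right_mem_Icc.2 ht20)
    rwa [s2.src, hvt] at hle
  have hq'β : dist v c ≤ pathLen s2.γ t2 s2.L := by
    have hle := dist_le_pathLen s2.rect ht20 (le_refl s2.L)
      (Set.left_mem_Icc.2 ht2L) (Set.right_mem_Icc.2 ht2L)
    rwa [s2.tgt, hvt] at hle
  -- n-point condition
  set w : ZMod n → X := fun i =>
    if i.val = 1 then a else if i.val = 2 then u else if i.val = 3 then b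
      else if i.val = 4 then c else v with hw_def
  obtain ⟨x', hcons, hexp, hrough⟩ := hpt w
  have hval1 : (((1:ℕ)) : ZMod n).val = 1 := ZMod.val_natCast_of_lt (by omega)
  have hval2 : (((2:ℕ)) : ZMod n).val = 2 := ZMod.val_natCast_of_lt (by omega)
  have hval3 : (((3:ℕ)) : ZMod n).val = 3 := ZMod.val_natCast_of_lt (by omega)
  have hval4 : (((4:ℕ)) : ZMod n).val = 4 := ZMod.val_natCast_of_lt (by omega)
  have hw1 : w ((1:ℕ) : ZMod n) = a := by
    show (if (((1:ℕ)) : ZMod n).val = 1 then a else if (((1:ℕ)) : ZMod n).val = 2 then u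
      else if (((1:ℕ)) : ZMod n).val = 3 then b
      else if (((1:ℕ)) : ZMod n).val = 4 then c else v) = a
    rw [hval1]; norm_num
  have hw2 : w ((2:ℕ) : ZMod n) = u := by
    show (if (((2:ℕ)) : ZMod n).val = 1 then a else if (((2:ℕ)) : ZMod n).val = 2 then u
      else if (((2:ℕ)) : ZMod n).val = 3 then b
      else if (((2:ℕ)) : ZMod n).val = 4 then c else v) = u
    rw [hval2]; norm_num
  have hw3 : w ((3:ℕ) : ZMod n) = b := by
    show (if (((3:ℕ)) : ZMod n).val = 1 then a else if (((3:ℕ)) : ZMod n).val = 2 then u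
      else if (((3:ℕ)) : ZMod n).val = 3 then b
      else if (((3:ℕ)) : ZMod n).val = 4 then c else v) = b
    rw [hval3]; norm_num
  have hw4 : w ((4:ℕ) : ZMod n) = c := by
    show (if (((4:ℕ)) : ZMod n).val = 1 then a else if (((4:ℕ)) : ZMod n).val = 2 then u
      else if (((4:ℕ)) : ZMod n).val = 3 then b
      else if (((4:ℕ)) : ZMod n).val = 4 then c else v) = c
    rw [hval4]; norm_num
  have hwv : ∀ m : ℕ, 5 ≤ m → m ≤ n → w ((m:ℕ) : ZMod n) = v := by
    intro m h5 hmn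
    have hdisj : m % n = 0 ∨ m % n = m := by
      rcases eq_or_lt_of_le hmn with hmn' | hmn'
      · left; rw [hmn']; exact Nat.mod_self n
      · right; exact Nat.mod_eq_of_lt hmn'
    have hne : m % n ≠ 1 ∧ m % n ≠ 2 ∧ m % n ≠ 3 ∧ m % n ≠ 4 := by omega
    show (if (((m:ℕ)) : ZMod n).val = 1 then a else if (((m:ℕ)) : ZMod n).val = 2 then u
      else if (((m:ℕ)) : ZMod n).val = 3 then b
      else if (((m:ℕ)) : ZMod n).val = 4 then c else v) = v
    rw [ZMod.val_natCast]
    rw [if_neg hne.1, if_neg hne.2.1, if_neg hne.2.2.1, if_neg hne.2.2.2]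
  have hw0 : w (0 : ZMod n) = v := by
    show (if (0 : ZMod n).val = 1 then a else if (0 : ZMod n).val = 2 then u
      else if (0 : ZMod n).val = 3 then b
      else if (0 : ZMod n).val = 4 then c else v) = v
    rw [ZMod.val_zero]; norm_num
  -- cast identities
  have hc1 : ((1:ℕ) : ZMod n) = (1 : ZMod n) := by push_cast; ring
  have hc21 : ((2:ℕ) : ZMod n) - 1 = ((1:ℕ) : ZMod n) := by push_cast; ring
  have hc32 : ((3:ℕ) : ZMod n) - 1 = ((2:ℕ) : ZMod n) := by push_cast; ring
  have hc43 : ((4:ℕ) : ZMod n) - 1 = ((3:ℕ) : ZMod n) := by push_cast; ring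
  have hc54 : ((5:ℕ) : ZMod n) - 1 = ((4:ℕ) : ZMod n) := by push_cast; ring
  have hc10 : (1 : ZMod n) - 1 = (0 : ZMod n) := by ring
  -- chain for filler points
  have hchain : ∀ m : ℕ, 5 ≤ m → m ≤ n → x' ((m:ℕ) : ZMod n) = x' ((5:ℕ) : ZMod n) := by
    intro m h5
    induction m, h5 using Nat.le_induction with
    | base => intro _; rfl
    | succ k hk5 IH =>
      intro hmn
      have hkn : k ≤ n := by omega
      have hstep := hcons ((k+1 : ℕ) : ZMod n)
      have hck : ((k+1:ℕ) : ZMod n) - 1 = ((k:ℕ) : ZMod n) := by push_cast; ring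
      rw [hck] at hstep
      rw [hwv (k+1) (by omega) hmn, hwv k hk5 hkn] at hstep
      simp only [dist_self] at hstep
      have heq : x' ((k+1:ℕ) : ZMod n) = x' ((k:ℕ) : ZMod n) := by
        have h9 := hstep.symm
        rwa [dist_eq_zero] at h9
      rw [heq]
      exact IH hkn
  have hx0 : x' (0 : ZMod n) = x' ((5:ℕ) : ZMod n) := by
    have := hchain n (by omega) (le_refl n)
    rwa [ZMod.natCast_self] at this
  -- extract distance identities
  have hE2 := hcons ((2:ℕ) : ZMod n)
  rw [hc21, hw2, hw1] at hE2
  have hE3 := hcons ((3:ℕ) : ZMod n)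
  rw [hc32, hw3, hw2] at hE3
  have hE4 := hcons ((4:ℕ) : ZMod n)
  rw [hc43, hw4, hw3] at hE4
  have hE5 := hcons ((5:ℕ) : ZMod n)
  rw [hc54, hwv 5 (le_refl 5) hn, hw4] at hE5
  have hE1 := hcons (1 : ZMod n)
  rw [hc10, hw0, ← hc1, hw1] at hE1
  rw [hx0] at hE1
  have hF3 := hexp ((3:ℕ) : ZMod n)
  rw [hw3, ← hc1, hw1] at hF3
  have hF4 := hexp ((4:ℕ) : ZMod n)
  rw [hw4, ← hc1, hw1] at hF4
  -- rough bound for u, v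
  have hne2 : ((2:ℕ) : ZMod n) ≠ (1 : ZMod n) := by
    intro heq
    rw [← hc1] at heq
    have h2 : (((2:ℕ) : ZMod n)).val = (((1:ℕ) : ZMod n)).val := by rw [heq]
    rw [hval1, hval2] at h2
    omega
  have hne5 : ((5:ℕ) : ZMod n) ≠ (1 : ZMod n) := by
    intro heq
    rw [← hc1] at heq
    have h2 : (((5:ℕ) : ZMod n)).val = (((1:ℕ) : ZMod n)).val := by rw [heq]
    rw [ZMod.val_natCast, hval1] at h2
    have hdisj : 5 % n = 0 ∨ 5 % n = 5 := by
      rcases eq_or_lt_of_le hn with hn' | hn'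
      · left; rw [← hn']
      · right; exact Nat.mod_eq_of_lt hn'
    omega
  have hR := hrough ((2:ℕ) : ZMod n) ((5:ℕ) : ZMod n) hne2 hne5
  rw [hw2, hwv 5 (le_refl 5) hn] at hR
  -- apply the Euclidean core
  have hcore := euclidCore (x' ((1:ℕ) : ZMod n)) (x' ((3:ℕ) : ZMod n)) (x' ((4:ℕ) : ZMod n))
      (x' ((2:ℕ) : ZMod n)) (x' ((5:ℕ) : ZMod n)) ac bc cc uc vc h
      (dist a b) (dist a c) (dist b c)
      (pathLen s1.γ 0 t1) (pathLen s1.γ t1 s1.L) (pathLen s2.γ 0 t2) (pathLen s2.γ t2 s2.L)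
      hh0 hh1 hhA hhB hhD hA hB hD
      (by rw [dist_comm (x' ((3:ℕ) : ZMod n)) (x' ((4:ℕ) : ZMod n)), ← hE4]
          exact dist_comm c b)
      hF3
      hF4
      (by rw [dist_comm (x' ((1:ℕ) : ZMod n)) (x' ((2:ℕ) : ZMod n)), ← hE2, dist_comm u a]
          exact hpα)
      (by rw [dist_comm (x' ((2:ℕ) : ZMod n)) (x' ((3:ℕ) : ZMod n)), ← hE3, dist_comm b u]
          exact hp'α)
      hαα'
      (by rw [← hE1]; exact hqβ)
      (by rw [← hE5]; exact hq'β)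
      hββ'
      hseg_u hu1 hu2 hseg_v hv1 (by rw [dist_comm]; exact hv2)
  linarith [hR, hcore]

end Shared



/-- If a length space satisfies a `C`-rough `n`-point condition for some
`n ≥ 5` and `C ≥ 0`, then it is `C'`-rCAT(0) with `C' = C + 2√3`. -/
theorem stmt_0 {X : Type*} [MetricSpace X] (hX : IsLengthSpace X)
    {n : ℕ} (hn : 5 ≤ n) {C : ℝ} (hC : 0 ≤ C)
    (hpt : RoughNPoint C n X) :
    RCat (C + 2 * Real.sqrt 3) X := by
  intro x y z xc yc zc hxy hyz hzx u v uc vc hcase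
  set M : ℝ := max 1 (max (dist x y) (max (dist x z) (dist y z))) with hM
  have hM1 : (1:ℝ) ≤ M := le_max_left _ _
  have hM0 : (0:ℝ) < M := lt_of_lt_of_le one_pos hM1
  have hSt : StdH x y z = 1 / M := rfl
  have hh0 : 0 < StdH x y z := by rw [hSt]; positivity
  have hh1 : StdH x y z ≤ 1 := by
    rw [hSt]
    rw [div_le_one hM0]
    exact hM1
  have hmul : ∀ d : ℝ, d ≤ M → StdH x y z * d ≤ 1 := by
    intro d hd
    rw [hSt]
    have hdm : 1 / M * d = d / M := by ring
    rw [hdm, div_le_one hM0]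
    exact hd
  have hdxy : dist x y ≤ M := le_trans (le_max_left _ _) (le_max_right _ _)
  have hdxz : dist x z ≤ M :=
    le_trans (le_trans (le_max_left _ _) (le_max_right _ _)) (le_max_right _ _)
  have hdyz : dist y z ≤ M :=
    le_trans (le_trans (le_max_right _ _) (le_max_right _ _)) (le_max_right _ _)
  have hmxy := hmul _ hdxy
  have hmxz := hmul _ hdxz
  have hmyz := hmul _ hdyz
  rcases hcase with ⟨hu, hv⟩ | ⟨hu, hv⟩ | ⟨hu, hv⟩
  · -- u on [x,y], v on [y,z]; shared vertex y
    exact sharedVertex hC hn hpt y x z u v yc xc zc uc vc (StdH x y z) hh0 hh1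
      (by rw [dist_comm y x]; exact hmxy)
      hmyz
      hmxz
      (by rw [dist_comm yc xc, dist_comm y x]; exact hxy)
      hyz
      (by rw [dist_comm x z, ← hzx, dist_comm xc zc])
      hu.symm hv
  · -- u on [x,y], v on [z,x]; shared vertex x
    exact sharedVertex hC hn hpt x y z u v xc yc zc uc vc (StdH x y z) hh0 hh1
      hmxy hmxz hmyz
      hxy
      (by rw [dist_comm x z, ← hzx, dist_comm xc zc])
      hyz
      hu hv.symm
  · -- u on [y,z], v on [z,x]; shared vertex z
    exact sharedVertex hC hn hpt z y x u v zc yc xc uc vc (StdH x y z) hh0 hh1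
      (by rw [dist_comm z y]; exact hmyz)
      (by rw [dist_comm z x]; exact hmxz)
      (by rw [dist_comm y x]; exact hmxy)
      (by rw [dist_comm zc yc, dist_comm z y]; exact hyz)
      hzx
      (by rw [dist_comm y x, ← hxy, dist_comm yc xc])
      hu.symm hv

end
end

section
/- Let x,y be points of the Euclidean plane ℝ² with l := |x−y| > 0, fix h > 0, set L := l + h, and let γ : [0,L] → ℝ² be an h-short segment from x to y parameterized by arclength. Then there exists a map λ : [0,L] → [x,y] (where [x,y] is the Euclidean line segment from x to y) such that λ(0) = x, λ(L) = y, and for all 0 ≤ t ≤ L: |λ(t)−x| ≤ |γ(t)−x|, |λ(t)−y| ≤ |γ(t)−y|, and |γ(t)−λ(t)| ≤ M, where M := (1/2)·√(2lh + h²). -/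
noncomputable section

set_option maxHeartbeats 1000000 in
lemma key_ineq (l h a b u V : ℝ) (hl : 0 < l) (hh : 0 < h)
    (ha : 0 ≤ a) (hb : 0 ≤ b) (hV : 0 ≤ V)
    (ha2 : a^2 = u^2 + V) (hb2 : b^2 = (l-u)^2 + V)
    (hab : a + b ≤ l + h) :
    a^2 - 2 * (max 0 (min l u)) * u + (max 0 (min l u))^2 ≤ (2*l*h + h^2)/4 := by
  rcases le_or_gt u 0 with hu | hu
  · have hs : max 0 (min l u) = 0 := max_eq_left (le_trans (min_le_right _ _) hu)
    rw [hs]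
    have h1 : a^2 + l^2 ≤ b^2 := by nlinarith [mul_nonneg hl.le (neg_nonneg.2 hu)]
    have hba : a ≤ l + h - b := by linarith
    have hb' : b ≤ l + h - a := by linarith
    have h2 : b^2 ≤ (l+h-a)^2 := by nlinarith [mul_le_mul hb' hb' hb (by linarith : (0:ℝ) ≤ l+h-a)]
    have h3 : 2*(l+h)*a ≤ (l+h)^2 - l^2 := by nlinarith
    nlinarith [mul_le_mul h3 h3 (by positivity : (0:ℝ) ≤ 2*(l+h)*a) (by nlinarith), sq_nonneg l, mul_pos (mul_pos hl hh) (mul_pos hl hh)]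
  rcases le_or_gt l u with hu2 | hu2
  · have hs : max 0 (min l u) = l := by
      rw [min_eq_left hu2]; exact max_eq_right hl.le
    rw [hs]
    have hval : a^2 - 2*l*u + l^2 = b^2 := by nlinarith
    have h1 : b^2 + l^2 ≤ a^2 := by nlinarith [mul_nonneg hl.le (by linarith : (0:ℝ) ≤ u - l)]
    have hba : b ≤ l + h - a := by linarith
    have ha' : a ≤ l + h - b := by linarith
    have h2 : a^2 ≤ (l+h-b)^2 := by nlinarith [mul_le_mul ha' ha' ha (by linarith : (0:ℝ) ≤ l+h-b)]
    have h3 : 2*(l+h)*b ≤ (l+h)^2 - l^2 := by nlinarith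
    have key : b^2 ≤ (2*l*h + h^2)/4 := by
      nlinarith [mul_le_mul h3 h3 (by positivity : (0:ℝ) ≤ 2*(l+h)*b) (by nlinarith), sq_nonneg l, mul_pos (mul_pos hl hh) (mul_pos hl hh)]
    linarith [hval]
  · have hs : max 0 (min l u) = u := by
      rw [min_eq_right hu2.le]; exact max_eq_right hu.le
    rw [hs]
    have hsq : (V + u*(l-u))^2 ≤ (a*b)^2 := by
      nlinarith [mul_nonneg hV (sq_nonneg (2*u - l))]
    have hL : 0 ≤ V + u*(l-u) := by
      have : 0 ≤ u*(l-u) := mul_nonneg hu.le (by linarith)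
      linarith
    have hab2 : V + u*(l-u) ≤ a*b := by
      have := Real.sqrt_le_sqrt hsq
      rwa [Real.sqrt_sq hL, Real.sqrt_sq (mul_nonneg ha hb)] at this
    nlinarith [sq_nonneg (a+b)]

set_option maxHeartbeats 2000000 in
/-- (Lemma 3.1) If `γ : [0, L] → ℝ²`, `L = l + h` with `l = |x-y| > 0`,
is an `h`-short segment from `x` to `y` parameterized by arclength, then there is a map
`lam : [0,L] → [x,y]` with `lam 0 = x`, `lam L = y`, `|lam t - x| ≤ |γ t - x|`,
`|lam t - y| ≤ |γ t - y|` and `|γ t - lam t| ≤ (1/2)√(2lh + h²)` for all `t ∈ [0,L]`. -/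
theorem stmt_5 (x y : E2) (hl : 0 < dist x y) (h : ℝ) (hh : 0 < h)
    (γ : ℝ → E2) (hsrc : γ 0 = x) (htgt : γ (dist x y + h) = y)
    (harc : ∀ s t : ℝ, 0 ≤ s → s ≤ t → t ≤ dist x y + h → pathLen γ s t = t - s) :
    ∃ lam : ℝ → E2, lam 0 = x ∧ lam (dist x y + h) = y ∧
      ∀ t ∈ Set.Icc (0 : ℝ) (dist x y + h),
        lam t ∈ segment ℝ x y ∧
        dist (lam t) x ≤ dist (γ t) x ∧
        dist (lam t) y ≤ dist (γ t) y ∧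
        dist (γ t) (lam t) ≤ (1 / 2) * Real.sqrt (2 * dist x y * h + h ^ 2) := by
  set l := dist x y with hldef
  set w : E2 := y - x with hwdef
  have hwn : ‖w‖ = l := by rw [hwdef, hldef, dist_eq_norm, norm_sub_rev]
  set u : ℝ → ℝ := fun t => (inner ℝ (γ t - x) w : ℝ) / l with hudef
  set s : ℝ → ℝ := fun t => max 0 (min l (u t)) with hsdef
  refine ⟨fun t => x + ((s t) / l) • w, ?_, ?_, ?_⟩
  · have hu0 : u 0 = 0 := by simp [hudef, hsrc]
    have : s 0 = 0 := by simp [hsdef, hu0, min_eq_right hl.le]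
    simp [this]
  · have huL : u (l + h) = l := by
      have hww : (inner ℝ w w : ℝ) = l^2 := by
        rw [real_inner_self_eq_norm_sq, hwn]
      show (inner ℝ (γ (l + h) - x) w : ℝ) / l = l
      rw [htgt, ← hwdef, hww, sq, mul_div_assoc, div_self hl.ne', mul_one]
    have hsL : s (l + h) = l := by simp [hsdef, huL, max_eq_right hl.le]
    show x + (s (l + h) / l) • w = y
    rw [hsL, div_self hl.ne', one_smul, hwdef]
    abel
  · intro t ht
    obtain ⟨ht0, htL⟩ := ht
    -- distance bounds along the path
    have dist_le : ∀ s' t' : ℝ, 0 ≤ s' → s' ≤ t' → t' ≤ l + h →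
        dist (γ s') (γ t') ≤ t' - s' := by
      intro s' t' h0 h1 h2
      have hpl := harc s' t' h0 h1 h2
      by_cases hE : eVariationOn γ (Set.Icc s' t') = ⊤
      · rw [pathLen, hE] at hpl
        simp at hpl
        have : s' = t' := by linarith
        simp [this]
      · have hed : edist (γ s') (γ t') ≤ eVariationOn γ (Set.Icc s' t') :=
          eVariationOn.edist_le γ (Set.left_mem_Icc.2 h1) (Set.right_mem_Icc.2 h1)
        calc dist (γ s') (γ t') = (edist (γ s') (γ t')).toReal := dist_edist _ _
          _ ≤ (eVariationOn γ (Set.Icc s' t')).toReal := ENNReal.toReal_mono hE hed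
          _ = t' - s' := hpl
    set a := dist (γ t) x with hadef
    set b := dist (γ t) y with hbdef
    have hat : a ≤ t := by
      have := dist_le 0 t le_rfl ht0 htL
      rw [hsrc] at this
      rw [hadef, dist_comm]
      simpa using this
    have hbt : b ≤ l + h - t := by
      have := dist_le t (l + h) ht0 htL le_rfl
      rw [htgt] at this
      rw [hbdef]
      linarith [this]
    have hab : a + b ≤ l + h := by linarith
    have ha0 : 0 ≤ a := dist_nonneg
    have hb0 : 0 ≤ b := dist_nonneg
    have hanorm : a = ‖γ t - x‖ := by rw [hadef, dist_eq_norm]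
    have hun : |u t| ≤ a := by
      have h1 : |(inner ℝ (γ t - x) w : ℝ)| ≤ a * l := by
        rw [hanorm]; simpa [hwn] using abs_real_inner_le_norm (γ t - x) w
      rw [hudef]
      rw [abs_div, abs_of_pos hl]
      exact (div_le_iff₀ hl).2 h1
    set V := a^2 - (u t)^2 with hVdef
    have hV : 0 ≤ V := by
      have h1 : (u t)^2 ≤ a^2 := sq_le_sq' (neg_le_of_abs_le hun) (le_of_abs_le hun)
      rw [hVdef]; linarith
    have ha2 : a^2 = (u t)^2 + V := by simp [hVdef]
    have hiu : (inner ℝ (γ t - x) w : ℝ) = u t * l := by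
      rw [hudef]; field_simp
    have hb2' : b^2 = a^2 - 2 * l * (u t) + l^2 := by
      have : γ t - y = (γ t - x) - w := by rw [hwdef]; abel
      rw [hbdef, dist_eq_norm, this, norm_sub_sq_real, hiu, ← hanorm, hwn]
      ring
    have hb2 : b^2 = (l - u t)^2 + V := by rw [hb2']; simp [hVdef]; ring
    have hs0 : 0 ≤ s t := le_max_left _ _
    have hsl : s t ≤ l := max_le hl.le (min_le_left _ _)
    have hsa : s t ≤ a := by
      have h1 : s t ≤ max 0 (u t) := max_le_max le_rfl (min_le_right _ _)
      have h2 : max 0 (u t) ≤ a := max_le ha0 (le_of_abs_le hun)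
      exact h1.trans h2
    have hsb : l - b ≤ s t := by
      have hub : l - b ≤ u t := by nlinarith
      have : l - b ≤ min l (u t) := le_min (by linarith) hub
      exact this.trans (le_max_right _ _)
    refine ⟨?_, ?_, ?_, ?_⟩
    · rw [segment_eq_image' ℝ x y]
      exact ⟨s t / l, ⟨by positivity, (div_le_one hl).2 hsl⟩, rfl⟩
    · have : dist (x + (s t / l) • w) x = s t := by
        rw [dist_eq_norm]
        simp only [add_sub_cancel_left, norm_smul, Real.norm_eq_abs, hwn,
          abs_of_nonneg (by positivity : (0:ℝ) ≤ s t / l)]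
        field_simp
      rw [this]; exact hsa
    · have : dist (x + (s t / l) • w) y = l - s t := by
        have he : x + (s t / l) • w - y = (s t / l - 1) • w := by
          rw [hwdef, sub_smul, one_smul]; abel
        rw [dist_eq_norm, he, norm_smul, Real.norm_eq_abs, hwn,
          abs_of_nonpos (by rw [sub_nonpos]; exact (div_le_one hl).2 hsl)]
        field_simp
        ring
      rw [this]; linarith
    · have hne : γ t - (x + (s t / l) • w) = (γ t - x) - (s t / l) • w := by abel
      have hd2 : dist (γ t) (x + (s t / l) • w) ^ 2
          = a^2 - 2 * (s t) * (u t) + (s t)^2 := by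
        rw [dist_eq_norm, hne, norm_sub_sq_real, real_inner_smul_right, hiu, ← hanorm,
          norm_smul, Real.norm_eq_abs, hwn, abs_of_nonneg (by positivity : (0:ℝ) ≤ s t / l)]
        field_simp
      have hkey := key_ineq l h a b (u t) V hl hh ha0 hb0 hV ha2 hb2 hab
      show dist (γ t) (x + (s t / l) • w) ≤ 1 / 2 * Real.sqrt (2 * l * h + h ^ 2)
      have hd2' : dist (γ t) (x + (s t / l) • w) ^ 2 ≤ (2*l*h + h^2)/4 := by
        rw [hd2]; exact hkey
      set d := dist (γ t) (x + (s t / l) • w) with hddef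
      have hd0 : 0 ≤ d := dist_nonneg
      have h4 : (2*d)^2 ≤ 2*l*h + h^2 := by nlinarith
      have h5 : 2*d ≤ Real.sqrt (2*l*h + h^2) := by
        calc 2*d = Real.sqrt ((2*d)^2) := (Real.sqrt_sq (by linarith)).symm
          _ ≤ _ := Real.sqrt_le_sqrt h4
      linarith


end
end

section
/- Let x,y be points of the Euclidean plane ℝ² with l := |x−y| > 0, let 0 < ε ≤ 1, set h := ε/(1 ∨ l) and L := l + h, and let γ : [0,L] → ℝ² be an h-short segment from x to y parameterized by arclength. Then there exists a map λ : [0,L] → [x,y] (the Euclidean line segment from x to y) such that λ(0) = x, λ(L) = y, |λ(t)−x| ≤ |γ(t)−x| and |λ(t)−y| ≤ |γ(t)−y| for all 0 ≤ t ≤ L, and |γ(t)−λ(t)| ≤ √(3ε)/2 for all 0 ≤ t ≤ L. -/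
noncomputable section

open RealInnerProductSpace

open RealInnerProductSpace in
lemma dist_le_of_pathLen (f : ℝ → EuclideanSpace ℝ (Fin 2)) (a b : ℝ) (hab : a ≤ b)
    (hpl : pathLen f a b = b - a) :
    dist (f a) (f b) ≤ b - a := by
  simp only [pathLen] at hpl
  by_cases hV : eVariationOn f (Set.Icc a b) = ⊤
  · rw [hV] at hpl; simp at hpl
    have hba : b = a := by linarith
    simp [hba]
  · have h1 := eVariationOn.edist_le f (Set.left_mem_Icc.mpr hab) (Set.right_mem_Icc.mpr hab)
    calc dist (f a) (f b) = (edist (f a) (f b)).toReal := by rw [dist_edist]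
      _ ≤ (eVariationOn f (Set.Icc a b)).toReal := ENNReal.toReal_mono hV h1
      _ = b - a := hpl


lemma key_arith (l h ε d1 d2 aa r I : ℝ) (hl : 0 < l) (hh0 : 0 < h) (hhε : h ≤ ε)
    (hlh : l * h ≤ ε) (hε1 : ε ≤ 1) (htri : l ≤ d1 + d2) (hd10 : 0 ≤ d1) (hd20 : 0 ≤ d2)
    (hsum : d1 + d2 ≤ l + h) (ha : aa = (d1 - d2 + l) / 2) (hrl : r * l = aa)
    (hI : 2 * I = d1 ^ 2 + l ^ 2 - d2 ^ 2) :
    d1 ^ 2 - 2 * r * I + r ^ 2 * l ^ 2 ≤ 3 * ε / 4 := by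
  have hh1 : h ≤ 1 := le_trans hhε hε1
  have hss : (d1 + d2 - l) * (d1 + d2 + l) ≤ h * (2 * l + h) :=
    mul_le_mul (by linarith) (by linarith) (by linarith) hh0.le
  have h3 : 2 * l * h + h ^ 2 ≤ 3 * ε := by nlinarith
  have hA : (d1 + d2) ^ 2 - l ^ 2 ≤ 3 * ε := by nlinarith
  have hmul : l * (d1 ^ 2 - 2 * r * I + r ^ 2 * l ^ 2) ≤ l * (3 * ε / 4) := by
    have e1 : l * (d1 ^ 2 - 2 * r * I + r ^ 2 * l ^ 2)
        = l * d1 ^ 2 - 2 * (r * l) * I + (r * l) ^ 2 * l := by ring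
    rw [e1, hrl]
    have hIv : I = (d1 ^ 2 + l ^ 2 - d2 ^ 2) / 2 := by linarith
    have e2 : l * d1 ^ 2 - 2 * aa * I + aa ^ 2 * l
        = l * ((d1 + d2) ^ 2 - l ^ 2) / 4 - (d1 - d2) ^ 2 * (d1 + d2 - l) / 2 := by
      rw [hIv, ha]; ring
    have hnn2 : 0 ≤ (d1 - d2) ^ 2 * (d1 + d2 - l) / 2 :=
      div_nonneg (mul_nonneg (sq_nonneg _) (by linarith)) (by norm_num)
    have hA' : l * ((d1 + d2) ^ 2 - l ^ 2) ≤ l * (3 * ε) :=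
      mul_le_mul_of_nonneg_left hA hl.le
    rw [e2]; linarith
  exact le_of_mul_le_mul_left hmul hl


/-- The special case of Lemma 3.1 with `h = ε/(1 ∨ l)`, `0 < ε ≤ 1`:
the distance bound becomes `√(3ε)/2`. -/
theorem stmt_6 (x y : E2) (hl : 0 < dist x y) (ε : ℝ) (hε0 : 0 < ε) (hε1 : ε ≤ 1)
    (γ : ℝ → E2) (hsrc : γ 0 = x)
    (htgt : γ (dist x y + ε / max 1 (dist x y)) = y)
    (harc : ∀ s t : ℝ, 0 ≤ s → s ≤ t → t ≤ dist x y + ε / max 1 (dist x y) →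
      pathLen γ s t = t - s) :
    ∃ lam : ℝ → E2, lam 0 = x ∧ lam (dist x y + ε / max 1 (dist x y)) = y ∧
      ∀ t ∈ Set.Icc (0 : ℝ) (dist x y + ε / max 1 (dist x y)),
        lam t ∈ segment ℝ x y ∧
        dist (lam t) x ≤ dist (γ t) x ∧
        dist (lam t) y ≤ dist (γ t) y ∧
        dist (γ t) (lam t) ≤ Real.sqrt (3 * ε) / 2 := by
  set l := dist x y with hldef
  set h := ε / max 1 l with hhdef
  set L := l + h with hLdef
  have hm1 : (1:ℝ) ≤ max 1 l := le_max_left _ _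
  have hml : l ≤ max 1 l := le_max_right _ _
  have hm0 : (0:ℝ) < max 1 l := by linarith
  have hh0 : 0 < h := div_pos hε0 hm0
  have hhε : h ≤ ε := by
    rw [hhdef]; exact div_le_of_le_mul₀ hm0.le hε0.le (by nlinarith)
  have hlh : l * h ≤ ε := by
    have h1 : (1 ⊔ l) * h = ε := by rw [hhdef]; field_simp
    nlinarith [mul_le_mul_of_nonneg_right hml hh0.le]
  -- definitions
  set a : ℝ → ℝ := fun t => (dist (γ t) x - dist (γ t) y + l) / 2 with hadef
  set lam : ℝ → EuclideanSpace ℝ (Fin 2) := fun t => x + (a t / l) • (y - x) with hlamdef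
  have hlam0 : lam 0 = x := by
    simp [hlamdef, hadef, hsrc, ← hldef]
  have hlamL : lam L = y := by
    have : a L = l := by simp [hadef, htgt, dist_comm y x, ← hldef]
    simp [hlamdef, this, div_self hl.ne', ← hldef]
  refine ⟨lam, hlam0, hlamL, ?_⟩
  rintro t ⟨ht0, htL⟩
  set d1 := dist (γ t) x with hd1def
  set d2 := dist (γ t) y with hd2def
  have hd1t : d1 ≤ t := by
    have := dist_le_of_pathLen γ 0 t ht0 (harc 0 t le_rfl ht0 htL)
    rw [hsrc] at this; rw [hd1def, dist_comm]; linarith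
  have hd2t : d2 ≤ L - t := by
    have := dist_le_of_pathLen γ t L (by linarith) (harc t L ht0 (by linarith) le_rfl)
    rw [htgt] at this; exact this
  have htri : l ≤ d1 + d2 := by
    rw [hldef, hd1def, hd2def, dist_comm (γ t) x]; exact dist_triangle x (γ t) y
  have hd10 : 0 ≤ d1 := dist_nonneg
  have hd20 : 0 ≤ d2 := dist_nonneg
  have htri2 : d1 ≤ d2 + l := by
    rw [hd1def, hd2def, hldef, dist_comm x y]; exact dist_triangle (γ t) y x
  have htri3 : d2 ≤ d1 + l := by
    rw [hd1def, hd2def, hldef]; exact dist_triangle (γ t) x y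
  have ha : a t = (d1 - d2 + l) / 2 := rfl
  have ha0 : 0 ≤ a t := by rw [ha]; linarith
  have hal : a t ≤ l := by rw [ha]; linarith
  have hsum : d1 + d2 ≤ L := by linarith
  -- distances to endpoints
  have hdistx : dist (lam t) x = a t := by
    rw [hlamdef]
    simp only [dist_eq_norm, add_sub_cancel_left, norm_smul, Real.norm_eq_abs,
      abs_of_nonneg (div_nonneg ha0 hl.le)]
    rw [← dist_eq_norm, dist_comm y x, ← hldef, div_mul_cancel₀ _ hl.ne']
  have hdisty : dist (lam t) y = l - a t := by
    have : lam t - y = (a t / l - 1) • (y - x) := by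
      rw [hlamdef]; simp only [sub_smul, one_smul]; abel
    rw [dist_eq_norm, this, norm_smul, Real.norm_eq_abs,
      abs_of_nonpos (by rw [sub_nonpos]; exact div_le_one_of_le₀ hal hl.le),
      ← dist_eq_norm, dist_comm y x, ← hldef]
    field_simp
    ring
  refine ⟨?_, ?_, ?_, ?_⟩
  · rw [segment_eq_image']
    exact ⟨a t / l, ⟨div_nonneg ha0 hl.le, div_le_one_of_le₀ hal hl.le⟩, rfl⟩
  · rw [hdistx, ha]; linarith
  · rw [hdisty, ha]; linarith
  · -- main estimate
    set r := a t / l with hrdef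
    have hrl : r * l = a t := div_mul_cancel₀ _ hl.ne'
    set P := γ t - x with hP
    set Y := y - x with hY
    have hPn : ‖P‖ = d1 := by rw [hP, ← dist_eq_norm]
    have hYn : ‖Y‖ = l := by rw [hY, ← dist_eq_norm, dist_comm y x]
    have hPYn : ‖P - Y‖ = d2 := by
      rw [hd2def, dist_eq_norm]; congr 1; rw [hP, hY]; abel
    have hI : 2 * ⟪P, Y⟫ = d1^2 + l^2 - d2^2 := by
      have := norm_sub_sq_real P Y
      rw [hPn, hYn, hPYn] at this; linarith
    have hdist : dist (γ t) (lam t) = ‖P - r • Y‖ := by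
      rw [dist_eq_norm, hlamdef]
      congr 1
      rw [hP, hY]; simp only [← hrdef]; abel
    have hsq : dist (γ t) (lam t) ^ 2 = d1^2 - 2 * r * ⟪P, Y⟫ + r^2 * l^2 := by
      rw [hdist, norm_sub_sq_real, hPn, norm_smul, Real.norm_eq_abs, real_inner_smul_right,
        mul_pow, sq_abs, hYn]
      ring
    set I := ⟪P, Y⟫ with hIdef
    have key : d1^2 - 2 * r * I + r^2 * l^2 ≤ 3 * ε / 4 :=
      key_arith l h ε d1 d2 (a t) r I hl hh0 hhε hlh hε1 htri hd10 hd20 (by linarith) ha hrl hI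
    have hdnn : (0:ℝ) ≤ dist (γ t) (lam t) := dist_nonneg
    have hsnn : (0:ℝ) ≤ Real.sqrt (3 * ε) / 2 := by positivity
    have hfin : dist (γ t) (lam t) ^ 2 ≤ (Real.sqrt (3 * ε) / 2) ^ 2 := by
      rw [div_pow, Real.sq_sqrt (by positivity : (0:ℝ) ≤ 3 * ε)]
      rw [hsq]; linarith
    calc dist (γ t) (lam t) = Real.sqrt (dist (γ t) (lam t) ^ 2) := (Real.sqrt_sq hdnn).symm
      _ ≤ Real.sqrt ((Real.sqrt (3 * ε) / 2) ^ 2) := Real.sqrt_le_sqrt hfin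
      _ = Real.sqrt (3 * ε) / 2 := Real.sqrt_sq hsnn


end
end

section
/- Let x₀,x₁,x₂,x₀',x₁',x₂' ∈ ℝ² (the Euclidean plane), let u_i ∈ [x₀,x_i] and u_i' ∈ [x₀',x_i'] for i = 1,2 (points on the Euclidean line segments), and let h = ε/(1 ∨ |x₀'−x₁'| ∨ |x₀'−x₂'|) for some 0 < ε ≤ 1. Suppose |x₁−x₂| = |x₁'−x₂'|, that |x₀'−x_i'| ≤ |x₀−x_i| ≤ |x₀'−x_i'| + h for i = 1,2, and that |u_i−x₀|/|x₀−x_i| = |u_i'−x₀'|/|x₀'−x_i'| for i = 1,2. Then |u₁−u₂| ≤ |u₁'−u₂'| + √(3ε). -/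
noncomputable section

lemma expand_sq_aux (t s : ℝ) (v w : E2) :
    ‖t • v - s • w‖ ^ 2 = t * (t - s) * ‖v‖ ^ 2 + s * (s - t) * ‖w‖ ^ 2
      + t * s * ‖v - w‖ ^ 2 := by
  have e1 := norm_sub_sq_real (t • v) (s • w)
  have e2 := norm_sub_sq_real v w
  rw [real_inner_smul_left, real_inner_smul_right, norm_smul, norm_smul] at e1
  rw [e1, mul_pow, mul_pow, Real.norm_eq_abs, Real.norm_eq_abs, sq_abs, sq_abs]
  linear_combination (-(t*s)) * e2

lemma delta_bound_aux (A A' h ε : ℝ) (h0A' : 0 ≤ A') (hA0 : 0 ≤ A)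
    (hupp : A ≤ A' + h)
    (hh0 : 0 ≤ h) (hhε : h ≤ ε) (hε1 : ε ≤ 1) (hA'h : A' * h ≤ ε) :
    A ^ 2 - A' ^ 2 ≤ 3 * ε := by
  have h1 : A ^ 2 ≤ (A' + h) ^ 2 := pow_le_pow_left₀ hA0 hupp 2
  have h2 : (A' + h) ^ 2 = A' ^ 2 + 2 * (A' * h) + h * h := by ring
  have h3 : h * h ≤ h * 1 := mul_le_mul_of_nonneg_left (by linarith) hh0
  linarith only [h1, h2, h3, hA'h, hhε, hε1, hh0]

lemma main_bound_aux (b₁ b₂ Δ₁ Δ₂ ε : ℝ) (hb₁ : 0 ≤ b₁) (hb₁' : b₁ ≤ 1)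
    (hb₂ : 0 ≤ b₂) (hb₂' : b₂ ≤ 1) (hΔ₁0 : 0 ≤ Δ₁) (hΔ₁ : Δ₁ ≤ 3 * ε)
    (hΔ₂0 : 0 ≤ Δ₂) (hΔ₂ : Δ₂ ≤ 3 * ε) :
    b₁ * (b₁ - b₂) * Δ₁ + b₂ * (b₂ - b₁) * Δ₂ ≤ 3 * ε := by
  rcases le_total b₂ b₁ with hbb | hbb
  · have c1 : b₁ * (b₁ - b₂) ≤ 1 :=
      mul_le_one₀ hb₁' (sub_nonneg.mpr hbb) (by linarith)
    have c2 : b₁ * (b₁ - b₂) * Δ₁ ≤ 1 * Δ₁ := mul_le_mul_of_nonneg_right c1 hΔ₁0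
    have c3 : b₂ * (b₂ - b₁) * Δ₂ ≤ 0 :=
      mul_nonpos_of_nonpos_of_nonneg
        (mul_nonpos_of_nonneg_of_nonpos hb₂ (by linarith)) hΔ₂0
    linarith only [c2, c3, hΔ₁]
  · have c1 : b₂ * (b₂ - b₁) ≤ 1 :=
      mul_le_one₀ hb₂' (sub_nonneg.mpr hbb) (by linarith)
    have c2 : b₂ * (b₂ - b₁) * Δ₂ ≤ 1 * Δ₂ := mul_le_mul_of_nonneg_right c1 hΔ₂0
    have c3 : b₁ * (b₁ - b₂) * Δ₁ ≤ 0 :=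
      mul_nonpos_of_nonpos_of_nonneg
        (mul_nonpos_of_nonneg_of_nonpos hb₁ (by linarith)) hΔ₁0
    linarith only [c2, c3, hΔ₂]

lemma final_aux (a r s : ℝ) (ha : 0 ≤ a) (hr : 0 ≤ r) (hs : 0 ≤ s)
    (hsq : a ^ 2 ≤ r ^ 2 + s ^ 2) : a ≤ r + s := by
  have h1 : a ^ 2 ≤ (r + s) ^ 2 := by
    have e : (r + s) ^ 2 = r ^ 2 + 2 * (r * s) + s ^ 2 := by ring
    have h2 : 0 ≤ r * s := mul_nonneg hr hs
    linarith only [hsq, e, h2]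
  calc a = Real.sqrt (a ^ 2) := (Real.sqrt_sq ha).symm
    _ ≤ Real.sqrt ((r + s) ^ 2) := Real.sqrt_le_sqrt h1
    _ = r + s := Real.sqrt_sq (by linarith)

lemma seg_sub_aux (x₀ x₁ u : E2) (a b : ℝ) (hab : a + b = 1)
    (hU : a • x₀ + b • x₁ = u) : u - x₀ = b • (x₁ - x₀) := by
  have ha : a = 1 - b := by linarith
  rw [← hU, ha]; module

set_option maxHeartbeats 1000000 in
/-- (Lemma 3.2) the Euclidean triangle comparison lemma. -/
theorem stmt_7 (x₀ x₁ x₂ x₀' x₁' x₂' u₁ u₂ u₁' u₂' : E2)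
    (hu₁ : u₁ ∈ segment ℝ x₀ x₁) (hu₂ : u₂ ∈ segment ℝ x₀ x₂)
    (hu₁' : u₁' ∈ segment ℝ x₀' x₁') (hu₂' : u₂' ∈ segment ℝ x₀' x₂')
    (ε : ℝ) (hε0 : 0 < ε) (hε1 : ε ≤ 1)
    (hne₁ : x₀ ≠ x₁) (hne₂ : x₀ ≠ x₂) (hne₁' : x₀' ≠ x₁') (hne₂' : x₀' ≠ x₂')
    (heq : dist x₁ x₂ = dist x₁' x₂')
    (hlow₁ : dist x₀' x₁' ≤ dist x₀ x₁)
    (hupp₁ : dist x₀ x₁ ≤ dist x₀' x₁' + ε / max 1 (max (dist x₀' x₁') (dist x₀' x₂')))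
    (hlow₂ : dist x₀' x₂' ≤ dist x₀ x₂)
    (hupp₂ : dist x₀ x₂ ≤ dist x₀' x₂' + ε / max 1 (max (dist x₀' x₁') (dist x₀' x₂')))
    (hr₁ : dist u₁ x₀ / dist x₀ x₁ = dist u₁' x₀' / dist x₀' x₁')
    (hr₂ : dist u₂ x₀ / dist x₀ x₂ = dist u₂' x₀' / dist x₀' x₂') :
    dist u₁ u₂ ≤ dist u₁' u₂' + Real.sqrt (3 * ε) := by
  obtain ⟨a₁, b₁, ha₁, hb₁, hab₁, hU₁⟩ := hu₁
  obtain ⟨a₂, b₂, ha₂, hb₂, hab₂, hU₂⟩ := hu₂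
  obtain ⟨a₁', b₁', ha₁', hb₁', hab₁', hU₁'⟩ := hu₁'
  obtain ⟨a₂', b₂', ha₂', hb₂', hab₂', hU₂'⟩ := hu₂'
  have hS₁ := seg_sub_aux x₀ x₁ u₁ a₁ b₁ hab₁ hU₁
  have hS₂ := seg_sub_aux x₀ x₂ u₂ a₂ b₂ hab₂ hU₂
  have hS₁' := seg_sub_aux x₀' x₁' u₁' a₁' b₁' hab₁' hU₁'
  have hS₂' := seg_sub_aux x₀' x₂' u₂' a₂' b₂' hab₂' hU₂'
  -- distances from x₀
  have hd₁ : (0:ℝ) < dist x₀ x₁ := dist_pos.mpr hne₁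
  have hd₂ : (0:ℝ) < dist x₀ x₂ := dist_pos.mpr hne₂
  have hd₁' : (0:ℝ) < dist x₀' x₁' := dist_pos.mpr hne₁'
  have hd₂' : (0:ℝ) < dist x₀' x₂' := dist_pos.mpr hne₂'
  have key : ∀ (x₀ x₁ u : E2) (b : ℝ), 0 ≤ b → u - x₀ = b • (x₁ - x₀) →
      dist u x₀ = b * dist x₀ x₁ := by
    intro x₀ x₁ u b hb hS
    rw [dist_eq_norm, hS, norm_smul, Real.norm_eq_abs, abs_of_nonneg hb,
      dist_eq_norm, ← norm_neg (x₀ - x₁)]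
    congr 1; abel
  have hD₁ := key x₀ x₁ u₁ b₁ hb₁ hS₁
  have hD₂ := key x₀ x₂ u₂ b₂ hb₂ hS₂
  have hD₁' := key x₀' x₁' u₁' b₁' hb₁' hS₁'
  have hD₂' := key x₀' x₂' u₂' b₂' hb₂' hS₂'
  -- equal ratios
  have hb₁eq : b₁ = b₁' := by
    rw [hD₁, hD₁'] at hr₁
    field_simp at hr₁; exact hr₁
  have hb₂eq : b₂ = b₂' := by
    rw [hD₂, hD₂'] at hr₂
    field_simp at hr₂; exact hr₂
  subst hb₁eq hb₂eq
  -- vectors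
  set v₁ := x₁ - x₀ with hv₁
  set v₂ := x₂ - x₀ with hv₂
  set w₁ := x₁' - x₀' with hw₁
  set w₂ := x₂' - x₀' with hw₂
  have hdu : dist u₁ u₂ = ‖b₁ • v₁ - b₂ • v₂‖ := by
    rw [dist_eq_norm]; congr 1
    rw [← hS₁, ← hS₂]; abel
  have hdu' : dist u₁' u₂' = ‖b₁ • w₁ - b₂ • w₂‖ := by
    rw [dist_eq_norm]; congr 1
    rw [← hS₁', ← hS₂']; abel
  have hnv₁ : dist x₀ x₁ = ‖v₁‖ := by
    rw [dist_eq_norm, hv₁, ← norm_neg (x₀ - x₁)]; congr 1; abel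
  have hnv₂ : dist x₀ x₂ = ‖v₂‖ := by
    rw [dist_eq_norm, hv₂, ← norm_neg (x₀ - x₂)]; congr 1; abel
  have hnw₁ : dist x₀' x₁' = ‖w₁‖ := by
    rw [dist_eq_norm, hw₁, ← norm_neg (x₀' - x₁')]; congr 1; abel
  have hnw₂ : dist x₀' x₂' = ‖w₂‖ := by
    rw [dist_eq_norm, hw₂, ← norm_neg (x₀' - x₂')]; congr 1; abel
  have hc : ‖v₁ - v₂‖ = ‖w₁ - w₂‖ := by
    have h1 : dist x₁ x₂ = ‖v₁ - v₂‖ := by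
      rw [dist_eq_norm]; congr 1; rw [hv₁, hv₂]; abel
    have h2 : dist x₁' x₂' = ‖w₁ - w₂‖ := by
      rw [dist_eq_norm]; congr 1; rw [hw₁, hw₂]; abel
    rw [← h1, ← h2, heq]
  rw [hnv₁] at hD₁ hd₁ hlow₁ hupp₁
  rw [hnv₂] at hD₂ hd₂ hlow₂ hupp₂
  rw [hnw₁] at hd₁' hlow₁ hupp₁
  rw [hnw₂] at hd₂' hlow₂ hupp₂
  rw [hnw₂] at hupp₁
  rw [hnw₁] at hupp₂
  -- the b's are in [0,1]
  have hb₁le : b₁ ≤ 1 := by linarith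
  have hb₂le : b₂ ≤ 1 := by linarith
  -- h bound
  set M : ℝ := max 1 (max ‖w₁‖ ‖w₂‖) with hM
  have hM1 : (1:ℝ) ≤ M := le_max_left _ _
  have hMw₁ : ‖w₁‖ ≤ M := le_trans (le_max_left _ _) (le_max_right _ _)
  have hMw₂ : ‖w₂‖ ≤ M := le_trans (le_max_right _ _) (le_max_right _ _)
  have hM0 : (0:ℝ) < M := by linarith
  set h : ℝ := ε / M with hh
  have hhM : h * M = ε := by rw [hh]; field_simp
  have hh0 : 0 ≤ h := by positivity
  have hhε : h ≤ ε := by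
    have h2 := mul_le_mul_of_nonneg_left hM1 hε0.le
    rw [hh, div_le_iff₀ hM0]; linarith only [h2]
  -- squared side differences
  have hw₁h : ‖w₁‖ * h ≤ ε := by
    calc ‖w₁‖ * h ≤ M * h := mul_le_mul_of_nonneg_right hMw₁ hh0
      _ = ε := by rw [mul_comm]; exact hhM
  have hw₂h : ‖w₂‖ * h ≤ ε := by
    calc ‖w₂‖ * h ≤ M * h := mul_le_mul_of_nonneg_right hMw₂ hh0
      _ = ε := by rw [mul_comm]; exact hhM
  have hΔ₁ : ‖v₁‖ ^ 2 - ‖w₁‖ ^ 2 ≤ 3 * ε :=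
    delta_bound_aux _ _ _ _ (norm_nonneg w₁) (norm_nonneg v₁) hupp₁ hh0 hhε hε1 hw₁h
  have hΔ₂ : ‖v₂‖ ^ 2 - ‖w₂‖ ^ 2 ≤ 3 * ε :=
    delta_bound_aux _ _ _ _ (norm_nonneg w₂) (norm_nonneg v₂) hupp₂ hh0 hhε hε1 hw₂h
  have hΔ₁0 : 0 ≤ ‖v₁‖ ^ 2 - ‖w₁‖ ^ 2 := by
    have := pow_le_pow_left₀ (norm_nonneg w₁) hlow₁ 2
    linarith only [this]
  have hΔ₂0 : 0 ≤ ‖v₂‖ ^ 2 - ‖w₂‖ ^ 2 := by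
    have := pow_le_pow_left₀ (norm_nonneg w₂) hlow₂ 2
    linarith only [this]
  -- expand squares
  have e1 := expand_sq_aux b₁ b₂ v₁ v₂
  have e2 := expand_sq_aux b₁ b₂ w₁ w₂
  have hsq : dist u₁ u₂ ^ 2 ≤ dist u₁' u₂' ^ 2 + 3 * ε := by
    rw [hdu, hdu', e1, e2, hc]
    have main := main_bound_aux b₁ b₂ (‖v₁‖ ^ 2 - ‖w₁‖ ^ 2) (‖v₂‖ ^ 2 - ‖w₂‖ ^ 2)
      ε hb₁ hb₁le hb₂ hb₂le hΔ₁0 hΔ₁ hΔ₂0 hΔ₂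
    linarith only [main]
  have hsqrt : Real.sqrt (3 * ε) ^ 2 = 3 * ε := Real.sq_sqrt (by positivity)
  exact final_aux _ _ _ dist_nonneg dist_nonneg (Real.sqrt_nonneg _)
    (by rw [hsqrt]; exact hsq)

end
end
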